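/- Let n ≥ 2 be an integer and ε_j = e^{2πij/n}. Then ∑_{j=1}^{n−1} 1/|1−ε_j| ≤ n·log n. -/

import Mathlib

open Real Finset

lemma norm_one_sub_exp_mul_I (θ : ℝ) :
    ‖(1 : ℂ) - Complex.exp (θ * Complex.I)‖ = 2 * |Real.sin (θ / 2)| := by
  have h1 : ‖(1 : ℂ) - Complex.exp (θ * Complex.I)‖ ^ 2 = 2 - 2 * Real.cos θ := by
    rw [Complex.sq_norm, Complex.normSq_apply]
    simp [Complex.exp_ofReal_mul_I_re, Complex.exp_ofReal_mul_I_im]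
    nlinarith [Real.sin_sq_add_cos_sq θ]
  have h2 : Real.cos θ = 1 - 2 * Real.sin (θ / 2) ^ 2 := by
    have h3 := Real.cos_two_mul (θ / 2)
    have h4 := Real.sin_sq_add_cos_sq (θ / 2)
    have h5 : 2 * (θ / 2) = θ := by ring
    rw [h5] at h3
    nlinarith
  have h5 : ‖(1 : ℂ) - Complex.exp (θ * Complex.I)‖ ^ 2 = (2 * |Real.sin (θ / 2)|) ^ 2 := by
    rw [h1, h2, mul_pow, sq_abs]; ring
  calc ‖(1 : ℂ) - Complex.exp (θ * Complex.I)‖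
      = Real.sqrt (‖(1 : ℂ) - Complex.exp (θ * Complex.I)‖ ^ 2) :=
        (Real.sqrt_sq (norm_nonneg _)).symm
    _ = 2 * |Real.sin (θ / 2)| := by rw [h5, Real.sqrt_sq (by positivity)]

lemma inv_two_sin_le (n j : ℕ) (hn : 2 ≤ n) (hj1 : 1 ≤ j) (hjn : j < n) :
    1 / (2 * Real.sin (Real.pi * j / n)) ≤ (n : ℝ) / (4 * j) + (n : ℝ) / (4 * ((n : ℝ) - j)) := by
  have hn0 : (0 : ℝ) < n := by positivity
  have hj0 : (0 : ℝ) < j := by exact_mod_cast hj1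
  have hnj : (0 : ℝ) < (n : ℝ) - j := by
    have : (j : ℝ) < n := by exact_mod_cast hjn
    linarith
  have hs : 0 < Real.sin (Real.pi * j / n) := by
    apply Real.sin_pos_of_pos_of_lt_pi
    · positivity
    · rw [div_lt_iff₀ hn0]
      have : (j : ℝ) < n := by exact_mod_cast hjn
      nlinarith [Real.pi_pos]
  rcases le_or_gt (Real.pi * j / n) (Real.pi / 2) with h | h
  · have hb := Real.mul_le_sin (x := Real.pi * j / n) (by positivity) h
    have hb' : 2 * j / n ≤ Real.sin (Real.pi * j / n) := by
      have hπ := Real.pi_pos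
      calc 2 * (j : ℝ) / n = 2 / Real.pi * (Real.pi * j / n) := by field_simp
        _ ≤ _ := hb
    have h1 : 1 / (2 * Real.sin (Real.pi * j / n)) ≤ (n : ℝ) / (4 * j) := by
      rw [div_le_div_iff₀ (by positivity) (by positivity)]
      have : 2 * j ≤ Real.sin (Real.pi * j / n) * n := by
        rw [div_le_iff₀ hn0] at hb'; linarith
      nlinarith
    have : (0:ℝ) < (n : ℝ) / (4 * ((n : ℝ) - j)) := by positivity
    linarith
  · have hrw : Real.sin (Real.pi * j / n) = Real.sin (Real.pi * ((n : ℝ) - j) / n) := by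
      rw [show Real.pi * ((n : ℝ) - j) / n = Real.pi - Real.pi * j / n by field_simp,
        Real.sin_pi_sub]
    have hle : Real.pi * ((n : ℝ) - j) / n ≤ Real.pi / 2 := by
      rw [show Real.pi * ((n : ℝ) - j) / n = Real.pi - Real.pi * j / n by field_simp]
      linarith
    have hb := Real.mul_le_sin (x := Real.pi * ((n : ℝ) - j) / n) (by positivity) hle
    have hb' : 2 * ((n : ℝ) - j) / n ≤ Real.sin (Real.pi * j / n) := by
      rw [hrw]
      have hπ := Real.pi_pos
      calc 2 * ((n : ℝ) - j) / n = 2 / Real.pi * (Real.pi * ((n : ℝ) - j) / n) := by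
            field_simp
        _ ≤ _ := hb
    have h1 : 1 / (2 * Real.sin (Real.pi * j / n)) ≤ (n : ℝ) / (4 * ((n : ℝ) - j)) := by
      rw [div_le_div_iff₀ (by positivity) (by positivity)]
      have : 2 * ((n : ℝ) - j) ≤ Real.sin (Real.pi * j / n) * n := by
        rw [div_le_iff₀ hn0] at hb'; linarith
      nlinarith
    have : (0:ℝ) < (n : ℝ) / (4 * j) := by positivity
    linarith

lemma aux_sum_le (n : ℕ) (hn : 2 ≤ n) :
    ∑ j ∈ Finset.Ico 1 n, ((n : ℝ) / (4 * j) + (n : ℝ) / (4 * ((n : ℝ) - j)))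
      ≤ (n : ℝ) * Real.log n := by
  have hrefl : ∑ j ∈ Finset.Ico 1 n, (1 : ℝ) / ((n : ℝ) - j)
      = ∑ j ∈ Finset.Ico 1 n, (1 : ℝ) / j := by
    refine Finset.sum_nbij' (fun j => n - j) (fun j => n - j) ?_ ?_ ?_ ?_ ?_
    · intro a ha; simp only [Finset.mem_Ico] at *; omega
    · intro a ha; simp only [Finset.mem_Ico] at *; omega
    · intro a ha; simp only [Finset.mem_Ico] at ha; omega
    · intro a ha; simp only [Finset.mem_Ico] at ha; omega
    · intro a ha
      simp only [Finset.mem_Ico] at ha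
      congr 1
      rw [Nat.cast_sub (by omega)]
  have hH : ∑ j ∈ Finset.Ico 1 n, (1 : ℝ) / j = (harmonic (n - 1) : ℝ) := by
    rw [harmonic_eq_sum_Icc]
    push_cast
    rw [show Finset.Icc 1 (n-1) = Finset.Ico 1 n by
      rw [← Finset.Ico_add_one_right_eq_Icc]; congr 1; omega]
    simp [one_div]
  have hHle : ∑ j ∈ Finset.Ico 1 n, (1 : ℝ) / j ≤ 1 + Real.log (n - 1 : ℕ) := by
    rw [hH]; exact harmonic_le_one_add_log _
  have hsum : ∑ j ∈ Finset.Ico 1 n, ((n : ℝ) / (4 * j) + (n : ℝ) / (4 * ((n : ℝ) - j)))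
      = (n : ℝ) / 2 * ∑ j ∈ Finset.Ico 1 n, (1 : ℝ) / j := by
    rw [Finset.sum_add_distrib]
    rw [show ∑ j ∈ Finset.Ico 1 n, (n : ℝ) / (4 * ((n:ℝ) - j))
        = (n:ℝ)/4 * ∑ j ∈ Finset.Ico 1 n, (1:ℝ) / ((n:ℝ) - j) by
      rw [Finset.mul_sum]; apply Finset.sum_congr rfl; intros; field_simp]
    rw [hrefl]
    rw [show ∑ j ∈ Finset.Ico 1 n, (n : ℝ) / (4 * (j:ℝ))
        = (n:ℝ)/4 * ∑ j ∈ Finset.Ico 1 n, (1:ℝ) / (j:ℝ) by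
      rw [Finset.mul_sum]; apply Finset.sum_congr rfl; intros; field_simp]
    ring
  rw [hsum]
  have key : 1 + Real.log (n - 1 : ℕ) ≤ 2 * Real.log n := by
    rcases eq_or_lt_of_le hn with h2 | h3
    · rw [← h2]
      norm_num
      linarith [Real.log_two_gt_d9]
    · have h3' : 3 ≤ n := h3
      have e1 : 1 ≤ Real.log n := by
        rw [Real.le_log_iff_exp_le (by positivity)]
        calc Real.exp 1 ≤ 2.7182818286 := (Real.exp_one_lt_d9).le
          _ ≤ 3 := by norm_num
          _ ≤ n := by exact_mod_cast h3'
      have e2 : Real.log ((n - 1 : ℕ) : ℝ) ≤ Real.log n := by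
        apply Real.log_le_log
          (by exact_mod_cast Nat.sub_pos_of_lt (by omega : 1 < n) : (0:ℝ) < ((n-1:ℕ):ℝ))
        exact_mod_cast Nat.sub_le n 1
      linarith
  calc (n : ℝ) / 2 * ∑ j ∈ Finset.Ico 1 n, (1 : ℝ) / j
      ≤ (n : ℝ) / 2 * (1 + Real.log (n - 1 : ℕ)) :=
        mul_le_mul_of_nonneg_left hHle (by positivity)
    _ ≤ (n : ℝ) / 2 * (2 * Real.log n) :=
        mul_le_mul_of_nonneg_left key (by positivity)
    _ = (n : ℝ) * Real.log n := by ring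

theorem sum_inv_dist_roots_of_unity (n : ℕ) (hn : 2 ≤ n) :
    ∑ j ∈ Finset.Ico 1 n,
      1 / ‖(1 : ℂ) - Complex.exp (2 * Real.pi * Complex.I * j / n)‖
      ≤ (n : ℝ) * Real.log n := by
  refine le_trans (Finset.sum_le_sum ?_) (aux_sum_le n hn)
  intro j hj
  rw [Finset.mem_Ico] at hj
  obtain ⟨hj1, hjn⟩ := hj
  have harg : (2 * Real.pi * Complex.I * j / n : ℂ)
      = ((2 * Real.pi * j / n : ℝ) : ℂ) * Complex.I := by
    push_cast
    ring
  rw [harg, norm_one_sub_exp_mul_I]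
  have habs : |Real.sin (2 * Real.pi * j / n / 2)| = Real.sin (Real.pi * j / n) := by
    rw [show 2 * Real.pi * j / n / 2 = Real.pi * j / n by ring]
    apply abs_of_pos
    apply Real.sin_pos_of_pos_of_lt_pi
    · have hj0 : (0:ℝ) < j := by exact_mod_cast hj1
      positivity
    · rw [div_lt_iff₀ (by positivity : (0:ℝ) < n)]
      have : (j : ℝ) < n := by exact_mod_cast hjn
      nlinarith [Real.pi_pos]
  rw [habs]
  exact inv_two_sin_le n j hn hj1 hjn
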